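/- Let m ∈ ℕ and let w and v be non-empty words in 𝒜₁ and 𝒜₂ respectively. Then, modulo the ideal L^{(m)}, one has j₁^{(m)}(w) = Σ_{k=1}^{m} i_{k,m}(w) ⊗ (t_{[k,m]} − t_{[k−1,m]}) and j₂^{(m)}(v) = Σ_{k=1}^{m} (t_{[k,m]} − t_{[k−1,m]}) ⊗ i_{k,m}(v), where t_{[0,m]} = 0. (Proposition 2.2) -/

import Mathlib

open scoped ComplexOrder TensorProduct

/-- `w` is a non-empty word in the generating set `G`. -/
def IsWord {R : Type*} [Monoid R] (G : Set R) (w : R) : Prop :=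
  ∃ l : List R, l ≠ [] ∧ (∀ x ∈ l, x ∈ G) ∧ w = l.prod

/-- `φ` is a state on the unital complex *-algebra `R`. -/
def IsState {R : Type*} [Ring R] [Algebra ℂ R] [StarRing R] (φ : R →ₗ[ℂ] ℂ) : Prop :=
  φ 1 = 1 ∧ ∀ x, 0 ≤ φ (x * star x)

/-- The ordered product `f a * f (a+1) * ⋯ * f b` (an empty product if `b < a`). -/
def ordProd {T : Type*} [Monoid T] (f : ℕ → T) (a b : ℕ) : T :=
  ((List.range' a (b + 1 - a)).map f).prod

/-- The element `t_{[k,m]}`: `g` at the tensor sites `k, …, m` (1-based), with the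
convention `t_{[0,m]} = 0`. -/
def tBlock {T : Type*} [Ring T] (g : ℕ → T) (k m : ℕ) : T :=
  if k = 0 then 0 else ordProd g k m

/-- The embedding at tensor site `k` among the sites `1, …, m`, with value `0` out of
range (the convention `i_{m+1,m}(a) = 0`). -/
def embSite {T R : Type*} [Ring T] (e : ℕ → R → T) (m k : ℕ) (x : R) : T :=
  if 1 ≤ k ∧ k ≤ m then e k x else 0

/-- `φt` is the Boolean extension of the state `φ` to the free product `S = R * ℂ[t]`
(with canonical embedding `ι : R → S` and separator `t`):  one has `φt 1 = 1` and
`φt (t^{e₀} w₁ t^{e₁} ⋯ wₙ t^{eₙ}) = φ(w₁) ⋯ φ(wₙ)` for all non-empty words `wᵢ` in the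
generating set `G` and all exponents with `e₁, …, e_{n-1} > 0`. -/
def IsBooleanExt {R S : Type*} [Ring R] [Algebra ℂ R] [Ring S] [Algebra ℂ S]
    (G : Set R) (ι : R → S) (t : S) (φ : R →ₗ[ℂ] ℂ) (φt : S →ₗ[ℂ] ℂ) : Prop :=
  φt 1 = 1 ∧
  ∀ (n : ℕ) (w : ℕ → R) (e : ℕ → ℕ),
    (∀ i < n, IsWord G (w i)) →
    (∀ i, 0 < i → i < n → 0 < e i) →
    φt (((List.range n).map fun i => t ^ e i * ι (w i)).prod * t ^ e n) =
      ((List.range n).map fun i => φ (w i)).prod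

/- In the following, for `i : Fin 2`:
* `A i` plays the role of the unital free *-algebra `𝒜ᵢ₊₁` with generating set `G i`
  (closed under the involution), so that `A i` is generated by `G i`;
* `B i` plays the role of `𝒜̃ᵢ₊₁ = 𝒜ᵢ₊₁ * ℂ[t]`, with canonical embedding `ι i` and with
  the hermitian separator `t i`, which together generate `B i`;
* `T` plays the role of the tensor product `𝒜̃^{(m)} = 𝒜̃₁^{⊗m} ⊗ 𝒜̃₂^{⊗m}`, with the
  canonical commuting embeddings `e i k : B i → T` onto the tensor sites `k = 1, …, m`
  (site `k` of block `i`), whose images generate `T`. -/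


section helpers

lemma ordProd_of_gt {M : Type*} [Monoid M] (f : ℕ → M) {a b : ℕ} (h : b < a) :
    ordProd f a b = 1 := by
  unfold ordProd
  rw [Nat.sub_eq_zero_of_le h]
  simp

lemma ordProd_cons {M : Type*} [Monoid M] (f : ℕ → M) {a b : ℕ} (h : a ≤ b) :
    ordProd f a b = f a * ordProd f (a + 1) b := by
  unfold ordProd
  have h1 : b + 1 - a = (b - a) + 1 := by omega
  have h2 : b + 1 - (a + 1) = b - a := by omega
  rw [h1, h2, List.range'_succ]
  simp

lemma commute_ordProd {M : Type*} [Monoid M] {c : M} (f : ℕ → M)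
    (h : ∀ l, Commute c (f l)) (a b : ℕ) : Commute c (ordProd f a b) := by
  apply Commute.list_prod_right
  intro x hx
  simp only [List.mem_map] at hx
  obtain ⟨l, -, rfl⟩ := hx
  exact h l

lemma commute_tBlock {Q : Type*} [Ring Q] {c : Q} (g : ℕ → Q)
    (h : ∀ l, Commute c (g l)) (k m : ℕ) : Commute c (tBlock g k m) := by
  unfold tBlock
  split
  · exact Commute.zero_right c
  · exact commute_ordProd g h k m

lemma map_tBlock {T Q : Type*} [Ring T] [Ring Q] (π : T →+* Q) (g : ℕ → T) (k m : ℕ) :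
    π (tBlock g k m) = tBlock (fun l => π (g l)) k m := by
  unfold tBlock ordProd
  split
  · simp
  · rw [map_list_prod, List.map_map]
    rfl

variable {Q : Type*} [Ring Q] {m : ℕ} {p : ℕ → Q}
  (hp : ∀ l, 1 ≤ l → l ≤ m → p l * p l = p l)
  (hpc : ∀ k l, Commute (p k) (p l))

include hp hpc in
lemma ordProd_absorb : ∀ n k, 1 ≤ k → k + n ≤ m → ordProd p k m * p (k + n) = ordProd p k m := by
  intro n
  induction n with
  | zero =>
    intro k hk hkm
    simp only [Nat.add_zero] at *
    rw [ordProd_cons p hkm]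
    have hc : Commute (p k) (ordProd p (k+1) m) := commute_ordProd p (fun l => hpc k l) _ _
    rw [mul_assoc, ← hc.eq, ← mul_assoc, hp k hk hkm]
  | succ n ih =>
    intro k hk hkm
    rw [ordProd_cons p (by omega), mul_assoc]
    have : k + (n + 1) = (k + 1) + n := by omega
    rw [this, ih (k+1) (by omega) (by omega)]

include hp hpc in
lemma ordProd_mul_ordProd : ∀ d l k, 1 ≤ k → k ≤ l → m + 1 - l ≤ d →
    ordProd p k m * ordProd p l m = ordProd p k m := by
  intro d
  induction d with
  | zero =>
    intro l k hk hkl hd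
    rw [ordProd_of_gt p (show m < l by omega), mul_one]
  | succ d ih =>
    intro l k hk hkl hd
    by_cases hlm : l ≤ m
    · rw [ordProd_cons p hlm, ← mul_assoc]
      have : l = k + (l - k) := by omega
      rw [show p l = p (k + (l - k)) by rw [← this]]
      rw [ordProd_absorb hp hpc (l - k) k hk (by omega)]
      exact ih (l + 1) k hk (by omega) (by omega)
    · rw [ordProd_of_gt p (show m < l by omega), mul_one]

include hp hpc in
lemma tBlock_mul_tBlock (a b : ℕ) (ha : a ≤ m + 1) (hb : b ≤ m + 1) :
    tBlock p a m * tBlock p b m = tBlock p (min a b) m := by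
  rcases Nat.eq_zero_or_pos a with rfl | hapos
  · simp [tBlock]
  rcases Nat.eq_zero_or_pos b with rfl | hbpos
  · simp [tBlock, Nat.min_eq_zero_iff]
  have hmin : min a b ≠ 0 := by omega
  unfold tBlock
  rw [if_neg (by omega), if_neg (by omega), if_neg hmin]
  rcases le_total a b with hab | hba
  · rw [Nat.min_eq_left hab]
    exact ordProd_mul_ordProd hp hpc (m + 1 - b) b a hapos hab le_rfl
  · rw [Nat.min_eq_right hba]
    have hc : Commute (ordProd p a m) (ordProd p b m) := by
      apply commute_ordProd
      intro l
      exact (commute_ordProd p (fun l' => hpc l l') a m).symm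
    rw [hc.eq]
    exact ordProd_mul_ordProd hp hpc (m + 1 - a) a b hbpos hba le_rfl

include hp hpc in
lemma q_orth (k l : ℕ) (hk1 : 1 ≤ k) (hkm : k ≤ m) (hl1 : 1 ≤ l) (hlm : l ≤ m) :
    (tBlock p k m - tBlock p (k-1) m) * (tBlock p l m - tBlock p (l-1) m) =
      if k = l then tBlock p k m - tBlock p (k-1) m else 0 := by
  rw [sub_mul, mul_sub, mul_sub,
    tBlock_mul_tBlock hp hpc k l (by omega) (by omega),
    tBlock_mul_tBlock hp hpc k (l-1) (by omega) (by omega),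
    tBlock_mul_tBlock hp hpc (k-1) l (by omega) (by omega),
    tBlock_mul_tBlock hp hpc (k-1) (l-1) (by omega) (by omega)]
  rcases lt_trichotomy k l with h | h | h
  · rw [if_neg (by omega)]
    rw [show min k l = k by omega, show min k (l-1) = k by omega,
      show min (k-1) l = k-1 by omega, show min (k-1) (l-1) = k-1 by omega]
    abel
  · subst h
    rw [if_pos rfl]
    rw [show min k k = k by omega, show min k (k-1) = k-1 by omega,
      show min (k-1) k = k-1 by omega, show min (k-1) (k-1) = k-1 by omega]
    abel
  · rw [if_neg (by omega)]
    rw [show min k l = l by omega, show min k (l-1) = l-1 by omega,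
      show min (k-1) l = l by omega, show min (k-1) (l-1) = l-1 by omega]
    abel

lemma abel_sum (F G : ℕ → Q) : ∀ n : ℕ,
    ∑ k ∈ Finset.Icc 1 n, (F k - F (k+1)) * G k =
      ∑ k ∈ Finset.Icc 1 n, F k * (G k - G (k-1)) - F (n+1) * G n + F 1 * G 0 := by
  intro n
  induction n with
  | zero => simp
  | succ n ih =>
    rw [← Finset.insert_Icc_right_eq_Icc_add_one (show 1 ≤ n + 1 by omega)]
    rw [Finset.sum_insert (by simp), Finset.sum_insert (by simp), ih]
    simp only [Nat.add_sub_cancel]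
    noncomm_ring

include hp hpc in
lemma sum_q_mul_sum_q (u v : ℕ → Q) (hvc : ∀ k l, Commute (v k) (p l)) :
    (∑ k ∈ Finset.Icc 1 m, u k * (tBlock p k m - tBlock p (k-1) m)) *
      (∑ l ∈ Finset.Icc 1 m, v l * (tBlock p l m - tBlock p (l-1) m)) =
      ∑ k ∈ Finset.Icc 1 m, (u k * v k) * (tBlock p k m - tBlock p (k-1) m) := by
  rw [Finset.sum_mul_sum]
  apply Finset.sum_congr rfl
  intro k hk
  simp only [Finset.mem_Icc] at hk
  rw [Finset.sum_eq_single k]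
  · have hqv : Commute (tBlock p k m - tBlock p (k-1) m) (v k) := by
      apply Commute.sub_left <;>
        exact (commute_tBlock p (fun l => hvc k l) _ m).symm
    calc u k * (tBlock p k m - tBlock p (k-1) m) * (v k * (tBlock p k m - tBlock p (k-1) m))
        = u k * ((tBlock p k m - tBlock p (k-1) m) * v k) * (tBlock p k m - tBlock p (k-1) m) := by
          noncomm_ring
      _ = u k * v k * ((tBlock p k m - tBlock p (k-1) m) * (tBlock p k m - tBlock p (k-1) m)) := by
          rw [hqv.eq]; noncomm_ring
      _ = u k * v k * (tBlock p k m - tBlock p (k-1) m) := by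
          rw [q_orth hp hpc k k hk.1 hk.2 hk.1 hk.2, if_pos rfl]
  · intro l hl hlk
    simp only [Finset.mem_Icc] at hl
    have hqv : Commute (tBlock p k m - tBlock p (k-1) m) (v l) := by
      apply Commute.sub_left <;>
        exact (commute_tBlock p (fun l' => hvc l l') _ m).symm
    calc u k * (tBlock p k m - tBlock p (k-1) m) * (v l * (tBlock p l m - tBlock p (l-1) m))
        = u k * ((tBlock p k m - tBlock p (k-1) m) * v l) * (tBlock p l m - tBlock p (l-1) m) := by
          noncomm_ring
      _ = u k * v l * ((tBlock p k m - tBlock p (k-1) m) * (tBlock p l m - tBlock p (l-1) m)) := by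
          rw [hqv.eq]; noncomm_ring
      _ = 0 := by
          rw [q_orth hp hpc k l hk.1 hk.2 hl.1 hl.2, if_neg (fun h => hlk h.symm), mul_zero]
  · intro hk'
    simp only [Finset.mem_Icc] at hk'
    omega

include hp hpc in
lemma word_sum {A : Type*} [Monoid A] (G : Set A) (J : A → Q) (x : ℕ → A → Q)
    (hJ : ∀ a b, J (a * b) = J a * J b)
    (hx : ∀ k a b, x k (a * b) = x k a * x k b)
    (hxc : ∀ k a l, Commute (x k a) (p l))
    (hgen : ∀ a ∈ G, J a = ∑ k ∈ Finset.Icc 1 m, x k a * (tBlock p k m - tBlock p (k-1) m)) :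
    ∀ l : List A, l ≠ [] → (∀ a ∈ l, a ∈ G) →
      J l.prod = ∑ k ∈ Finset.Icc 1 m, x k l.prod * (tBlock p k m - tBlock p (k-1) m) := by
  intro l
  induction l with
  | nil => intro h; exact absurd rfl h
  | cons a tl ih =>
    intro _ hmem
    rcases List.eq_nil_or_concat tl with rfl | _
    · simp only [List.prod_cons, List.prod_nil, mul_one]
      exact hgen a (hmem a (by simp))
    · have htl : tl ≠ [] := by rintro rfl; simp_all
      rw [List.prod_cons, hJ, hgen a (hmem a (by simp)),
        ih htl (fun b hb => hmem b (by simp [hb])),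
        sum_q_mul_sum_q hp hpc _ _ (fun k l' => hxc k tl.prod l')]
      apply Finset.sum_congr rfl
      intro k _
      rw [hx]

end helpers

theorem boolean_extension_component_form
    {A B : Fin 2 → Type*} {T : Type*}
    [∀ i, Ring (A i)] [∀ i, Algebra ℂ (A i)] [∀ i, StarRing (A i)] [∀ i, StarModule ℂ (A i)]
    [∀ i, Ring (B i)] [∀ i, Algebra ℂ (B i)] [∀ i, StarRing (B i)] [∀ i, StarModule ℂ (B i)]
    [Ring T] [Algebra ℂ T] [StarRing T] [StarModule ℂ T]
    (G : ∀ i, Set (A i)) (hG : ∀ i, ∀ x ∈ G i, star x ∈ G i)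
    (hA : ∀ i, Algebra.adjoin ℂ (G i) = ⊤)
    (ι : ∀ i, A i →⋆ₐ[ℂ] B i) (t : ∀ i, B i) (ht : ∀ i, star (t i) = t i)
    (hB : ∀ i, Algebra.adjoin ℂ (Set.range (ι i) ∪ {t i}) = ⊤)
    (m : ℕ) (hm : 1 ≤ m)
    (e : ∀ i, ℕ → B i →⋆ₐ[ℂ] T)
    (hcomm : ∀ (i i' : Fin 2) (k k' : ℕ), (i, k) ≠ (i', k') →
      ∀ (x : B i) (y : B i'), Commute (e i k x) (e i' k' y))
    (hT : Algebra.adjoin ℂ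
      {x : T | ∃ (i : Fin 2) (k : ℕ), 1 ≤ k ∧ k ≤ m ∧ ∃ b : B i, x = e i k b} = ⊤)
    -- the *-homomorphisms `j₁^{(m)}`, `j₂^{(m)}`, given on the generators by
    -- `j₁^{(m)}(a) = Σ_{k=1}^m (i_{k,m}(a) - i_{k+1,m}(a)) ⊗ t_{[k,m]}` and
    -- `j₂^{(m)}(b) = Σ_{k=1}^m t_{[k,m]} ⊗ (i_{k,m}(b) - i_{k+1,m}(b))`
    (j : ∀ i, A i →⋆ₐ[ℂ] T)
    (hj1 : ∀ a ∈ G 0, j 0 a = ∑ k ∈ Finset.Icc 1 m,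
      (embSite (fun l x => e 0 l x) m k (ι 0 a) - embSite (fun l x => e 0 l x) m (k + 1) (ι 0 a)) *
        tBlock (fun l => e 1 l (t 1)) k m)
    (hj2 : ∀ b ∈ G 1, j 1 b = ∑ k ∈ Finset.Icc 1 m,
      tBlock (fun l => e 0 l (t 0)) k m *
        (embSite (fun l x => e 1 l x) m k (ι 1 b) - embSite (fun l x => e 1 l x) m (k + 1) (ι 1 b)))
    -- the two-sided *-ideal `L^{(m)}` generated by the elements `i_{k,2m}(t(1-t))`
    (L : TwoSidedIdeal T)
    (hL : L = TwoSidedIdeal.span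
      {x : T | ∃ (i : Fin 2) (k : ℕ), 1 ≤ k ∧ k ≤ m ∧ x = e i k (t i * (1 - t i))})
    -- non-empty words `w`, `v` in `𝒜₁`, `𝒜₂`
    (w : A 0) (v : A 1) (hw : IsWord (G 0) w) (hv : IsWord (G 1) v) :
    -- `j₁^{(m)}(w) = Σ_{k=1}^m i_{k,m}(w) ⊗ (t_{[k,m]} - t_{[k-1,m]})  (mod L^{(m)})`
    j 0 w - (∑ k ∈ Finset.Icc 1 m, e 0 k (ι 0 w) *
        (tBlock (fun l => e 1 l (t 1)) k m - tBlock (fun l => e 1 l (t 1)) (k - 1) m)) ∈ L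
    ∧
    -- `j₂^{(m)}(v) = Σ_{k=1}^m (t_{[k,m]} - t_{[k-1,m]}) ⊗ i_{k,m}(v)  (mod L^{(m)})`
    j 1 v - (∑ k ∈ Finset.Icc 1 m,
        (tBlock (fun l => e 0 l (t 0)) k m - tBlock (fun l => e 0 l (t 0)) (k - 1) m) *
          e 1 k (ι 1 v)) ∈ L := by
  classical
  set π : T →+* L.ringCon.Quotient := RingCon.mk' L.ringCon with hπ
  -- basic facts about the quotient map
  have hker : ∀ x ∈ L, π x = 0 := by
    intro x hx
    have h0 : L.ringCon x 0 := (L.mem_iff x).mp hx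
    exact (RingCon.eq _).mpr h0
  have hkey : ∀ a b : T, π a = π b → a - b ∈ L := by
    intro a b h
    exact (L.rel_iff a b).mp ((RingCon.eq _).mp h)
  have hπc : ∀ {x y : T}, Commute x y → Commute (π x) (π y) := by
    intro x y h
    show π x * π y = π y * π x
    rw [← map_mul, ← map_mul, h.eq]
  have hne01 : ∀ k l : ℕ, ((0 : Fin 2), k) ≠ ((1 : Fin 2), l) := by
    intro k l h
    have h2 : (0 : Fin 2) = 1 := congrArg Prod.fst h
    exact absurd h2 (by decide)
  have hne10 : ∀ k l : ℕ, ((1 : Fin 2), k) ≠ ((0 : Fin 2), l) := by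
    intro k l h
    have h2 : (1 : Fin 2) = 0 := congrArg Prod.fst h
    exact absurd h2 (by decide)
  -- the projected separators are idempotent
  have hidem : ∀ (i : Fin 2) (l : ℕ), 1 ≤ l → l ≤ m →
      π (e i l (t i)) * π (e i l (t i)) = π (e i l (t i)) := by
    intro i l h1 h2
    have hx : e i l (t i * (1 - t i)) ∈ L := by
      rw [hL]
      exact TwoSidedIdeal.subset_span ⟨i, l, h1, h2, rfl⟩
    have h0 : π (e i l (t i * (1 - t i))) = 0 := hker _ hx
    rw [map_mul, map_sub, map_one, map_mul, map_sub, map_one, mul_sub, mul_one] at h0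
    exact (sub_eq_zero.mp h0).symm
  -- pairwise commutation of the separators within a block
  have hpcomm : ∀ (i : Fin 2) (k l : ℕ),
      Commute (π (e i k (t i))) (π (e i l (t i))) := by
    intro i k l
    rcases eq_or_ne k l with rfl | hkl
    · exact Commute.refl _
    · exact hπc (hcomm i i k l (by simp [hkl]) _ _)
  -- Part 1
  have part1 : π (j 0 w) = π (∑ k ∈ Finset.Icc 1 m, e 0 k (ι 0 w) *
      (tBlock (fun l => e 1 l (t 1)) k m - tBlock (fun l => e 1 l (t 1)) (k - 1) m)) := by
    obtain ⟨lw, hlwne, hlwG, rfl⟩ := hw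
    have hmain := word_sum (Q := L.ringCon.Quotient) (m := m)
      (p := fun l => π (e 1 l (t 1))) (hidem 1) (hpcomm 1) (G 0)
      (fun a => π (j 0 a)) (fun k a => π (e 0 k (ι 0 a)))
      (by intro a b; simp only [map_mul])
      (by intro k a b; simp only [map_mul])
      (by intro k a l; exact hπc (hcomm 0 1 k l (hne01 k l) _ _))
      ?_ lw hlwne hlwG
    · beta_reduce at hmain
      rw [hmain, map_sum]
      apply Finset.sum_congr rfl
      intro k _
      rw [map_mul, map_sub, map_tBlock, map_tBlock]
    · -- the generator identity
      intro a ha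
      beta_reduce
      rw [hj1 a ha, map_sum]
      have hstep : ∀ k ∈ Finset.Icc 1 m,
          π ((embSite (fun l x => e 0 l x) m k (ι 0 a) -
              embSite (fun l x => e 0 l x) m (k + 1) (ι 0 a)) *
            tBlock (fun l => e 1 l (t 1)) k m) =
          (π (embSite (fun l x => e 0 l x) m k (ι 0 a)) -
            π (embSite (fun l x => e 0 l x) m (k + 1) (ι 0 a))) *
            tBlock (fun l => π (e 1 l (t 1))) k m := by
        intro k _
        rw [map_mul, map_sub, map_tBlock]
      rw [Finset.sum_congr rfl hstep]
      rw [abel_sum (fun k => π (embSite (fun l x => e 0 l x) m k (ι 0 a)))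
        (fun k => tBlock (fun l => π (e 1 l (t 1))) k m) m]
      have hF0 : π (embSite (fun l x => e 0 l x) m (m + 1) (ι 0 a)) = 0 := by
        rw [embSite, if_neg (by omega), map_zero]
      have hG0 : tBlock (fun l => π (e 1 l (t 1))) 0 m = 0 := by
        rw [tBlock, if_pos rfl]
      rw [hF0, hG0, zero_mul, mul_zero, sub_zero, add_zero]
      apply Finset.sum_congr rfl
      intro k hk
      simp only [Finset.mem_Icc] at hk
      rw [embSite, if_pos ⟨hk.1, hk.2⟩]
  -- Part 2
  have part2 : π (j 1 v) = π (∑ k ∈ Finset.Icc 1 m,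
      (tBlock (fun l => e 0 l (t 0)) k m - tBlock (fun l => e 0 l (t 0)) (k - 1) m) *
        e 1 k (ι 1 v)) := by
    obtain ⟨lv, hlvne, hlvG, rfl⟩ := hv
    have hmain := word_sum (Q := L.ringCon.Quotient) (m := m)
      (p := fun l => π (e 0 l (t 0))) (hidem 0) (hpcomm 0) (G 1)
      (fun b => π (j 1 b)) (fun k b => π (e 1 k (ι 1 b)))
      (by intro a b; simp only [map_mul])
      (by intro k a b; simp only [map_mul])
      (by intro k a l; exact hπc (hcomm 1 0 k l (hne10 k l) _ _))
      ?_ lv hlvne hlvG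
    · beta_reduce at hmain
      rw [hmain, map_sum]
      apply Finset.sum_congr rfl
      intro k _
      rw [map_mul, map_sub, map_tBlock, map_tBlock]
      have hc : Commute (π (e 1 k (ι 1 lv.prod)))
          (tBlock (fun l => π (e 0 l (t 0))) k m -
            tBlock (fun l => π (e 0 l (t 0))) (k - 1) m) := by
        apply Commute.sub_right <;>
          exact commute_tBlock _ (fun l => hπc (hcomm 1 0 k l (hne10 k l) _ _)) _ m
      rw [← hc.eq]
    · -- the generator identity
      intro b hb
      beta_reduce
      rw [hj2 b hb, map_sum]
      have hstep : ∀ k ∈ Finset.Icc 1 m,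
          π (tBlock (fun l => e 0 l (t 0)) k m *
            (embSite (fun l x => e 1 l x) m k (ι 1 b) -
              embSite (fun l x => e 1 l x) m (k + 1) (ι 1 b))) =
          (π (embSite (fun l x => e 1 l x) m k (ι 1 b)) -
            π (embSite (fun l x => e 1 l x) m (k + 1) (ι 1 b))) *
            tBlock (fun l => π (e 0 l (t 0))) k m := by
        intro k _
        rw [map_mul, map_sub, map_tBlock]
        have hcE : ∀ k' : ℕ, Commute (π (embSite (fun l x => e 1 l x) m k' (ι 1 b)))
            (tBlock (fun l => π (e 0 l (t 0))) k m) := by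
          intro k'
          apply commute_tBlock
          intro l
          rw [embSite]
          split
          · exact hπc (hcomm 1 0 k' l (hne10 k' l) _ _)
          · rw [map_zero]; exact Commute.zero_left _
        have hc : Commute (π (embSite (fun l x => e 1 l x) m k (ι 1 b)) -
            π (embSite (fun l x => e 1 l x) m (k + 1) (ι 1 b)))
            (tBlock (fun l => π (e 0 l (t 0))) k m) :=
          Commute.sub_left (hcE k) (hcE (k + 1))
        rw [← hc.eq]
      rw [Finset.sum_congr rfl hstep]
      rw [abel_sum (fun k => π (embSite (fun l x => e 1 l x) m k (ι 1 b)))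
        (fun k => tBlock (fun l => π (e 0 l (t 0))) k m) m]
      have hF0 : π (embSite (fun l x => e 1 l x) m (m + 1) (ι 1 b)) = 0 := by
        rw [embSite, if_neg (by omega), map_zero]
      have hG0 : tBlock (fun l => π (e 0 l (t 0))) 0 m = 0 := by
        rw [tBlock, if_pos rfl]
      rw [hF0, hG0, zero_mul, mul_zero, sub_zero, add_zero]
      apply Finset.sum_congr rfl
      intro k hk
      simp only [Finset.mem_Icc] at hk
      rw [embSite, if_pos ⟨hk.1, hk.2⟩]
  exact ⟨hkey _ _ part1, hkey _ _ part2⟩
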